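/- Let t ∈ (0,1) and x₂, x₃ ∈ ℝ. There exists a unique pair of differentiable functions y₂, y₃ : [0,t] → ℝ satisfying, for all h ∈ [0,t], y₂′(h) = −(3/2 − 2·y₂(h))/(1−h) and y₃′(h) = −(3/2)·(y₂(h) + 1 − 2·y₃(h))/(1−h), together with the terminal conditions y₂(t) = x₂ and y₃(t) = x₃; moreover this solution satisfies y₃(0) = γ(x₂,x₃,t). -/

import Mathlib

/-- γ(x₂,x₃,t) = (1−t)³·x₃ + (3t/2)·(1−t)²·x₂ + (t/8)·(12 − 3t − 2t²) -/
noncomputable def gammaUC (x₂ x₃ t : ℝ) : ℝ :=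
  (1 - t) ^ 3 * x₃ + (3 * t / 2) * (1 - t) ^ 2 * x₂ + (t / 8) * (12 - 3 * t - 2 * t ^ 2)

/-- The pair (y₂, y₃) solves the backward ODE system on [0,t] with terminal data (x₂,x₃):
y₂′(h) = −(3/2 − 2·y₂(h))/(1−h), y₃′(h) = −(3/2)·(y₂(h) + 1 − 2·y₃(h))/(1−h),
y₂(t) = x₂, y₃(t) = x₃. -/
def IsODESol (t x₂ x₃ : ℝ) (y₂ y₃ : ℝ → ℝ) : Prop :=
  (∀ h ∈ Set.Icc (0 : ℝ) t,
      HasDerivWithinAt y₂ (-(3 / 2 - 2 * y₂ h) / (1 - h)) (Set.Icc (0 : ℝ) t) h) ∧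
  (∀ h ∈ Set.Icc (0 : ℝ) t,
      HasDerivWithinAt y₃ (-(3 / 2) * (y₂ h + 1 - 2 * y₃ h) / (1 - h)) (Set.Icc (0 : ℝ) t) h) ∧
  y₂ t = x₂ ∧ y₃ t = x₃

/-- derivative of `1 - x`. -/
lemma hasDerivAt_one_sub (h : ℝ) : HasDerivAt (fun x : ℝ => 1 - x) (-1) h := by
  simpa using (hasDerivAt_id h).const_sub 1

lemma hasDerivAt_div_sq (c h : ℝ) (hh : (1:ℝ) - h ≠ 0) :
    HasDerivAt (fun x : ℝ => c / (1 - x) ^ 2) (2 * c / (1 - h) ^ 3) h := by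
  have h1 : HasDerivAt (fun x : ℝ => (1 - x) ^ 2) (2 * (1 - h) ^ 1 * (-1)) h := by
    simpa using (hasDerivAt_one_sub h).fun_pow 2
  have h2 := (hasDerivAt_const h c).fun_div h1 (pow_ne_zero 2 hh)
  convert h2 using 1
  · rfl
  · rfl
  field_simp
  ring

lemma hasDerivAt_div_cube (c h : ℝ) (hh : (1:ℝ) - h ≠ 0) :
    HasDerivAt (fun x : ℝ => c / (1 - x) ^ 3) (3 * c / (1 - h) ^ 4) h := by
  have h1 : HasDerivAt (fun x : ℝ => (1 - x) ^ 3) (3 * (1 - h) ^ 2 * (-1)) h := by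
    simpa using (hasDerivAt_one_sub h).fun_pow 3
  have h2 := (hasDerivAt_const h c).fun_div h1 (pow_ne_zero 3 hh)
  convert h2 using 1
  · rfl
  · rfl
  field_simp
  ring

/-- If a function has derivative zero within `Icc 0 t` at every point, it is constant there. -/
lemma const_on_Icc_of_deriv_zero {t : ℝ} {f : ℝ → ℝ}
    (hf : ∀ h ∈ Set.Icc (0:ℝ) t, HasDerivWithinAt f 0 (Set.Icc (0:ℝ) t) h) :
    ∀ h ∈ Set.Icc (0:ℝ) t, f h = f t := by
  intro h hh
  have hcont : ContinuousOn f (Set.Icc (0:ℝ) t) := fun x hx => (hf x hx).continuousWithinAt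
  have key := constant_of_has_deriv_right_zero
    (f := f) (a := h) (b := t)
    (hcont.mono (Set.Icc_subset_Icc hh.1 le_rfl)) ?_ t ⟨hh.2, le_rfl⟩
  · exact key.symm
  · intro x hx
    have hx' : x ∈ Set.Icc (0:ℝ) t := ⟨hh.1.trans hx.1, hx.2.le⟩
    refine (hf x hx').mono_of_mem_nhdsWithin ?_
    rw [mem_nhdsWithin]
    refine ⟨Set.Iio t, isOpen_Iio, hx.2, ?_⟩
    rintro y ⟨hy1, hy2⟩
    exact ⟨hx'.1.trans hy2, le_of_lt hy1⟩

theorem ode_solution_unique_and_gamma (t x₂ x₃ : ℝ) (ht : t ∈ Set.Ioo (0 : ℝ) 1) :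
    ∃ y₂ y₃ : ℝ → ℝ, IsODESol t x₂ x₃ y₂ y₃ ∧
      (∀ z₂ z₃ : ℝ → ℝ, IsODESol t x₂ x₃ z₂ z₃ →
        Set.EqOn z₂ y₂ (Set.Icc 0 t) ∧ Set.EqOn z₃ y₃ (Set.Icc 0 t)) ∧
      y₃ 0 = gammaUC x₂ x₃ t := by
  obtain ⟨ht0, ht1⟩ := ht
  have hnet : (1:ℝ) - t ≠ 0 := by intro hc; nlinarith
  obtain ⟨C, hC⟩ : ∃ C : ℝ, C = (x₂ - 3/4) * (1 - t) ^ 2 := ⟨_, rfl⟩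
  obtain ⟨D, hD⟩ : ∃ D : ℝ, D = (x₃ - 7/8) * (1 - t) ^ 3 - (3/2) * C * (1 - t) := ⟨_, rfl⟩
  obtain ⟨y₂, hy₂⟩ : ∃ f : ℝ → ℝ, f = fun h => 3/4 + C / (1 - h) ^ 2 := ⟨_, rfl⟩
  obtain ⟨y₃, hy₃⟩ :
      ∃ f : ℝ → ℝ, f = fun h => 7/8 + (3/2 * C) / (1 - h) ^ 2 + D / (1 - h) ^ 3 := ⟨_, rfl⟩
  have hne : ∀ h ∈ Set.Icc (0:ℝ) t, (1:ℝ) - h ≠ 0 := by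
    intro h hh
    have := hh.2
    intro hc; nlinarith
  -- existence
  have hsol : IsODESol t x₂ x₃ y₂ y₃ := by
    refine ⟨?_, ?_, ?_, ?_⟩
    · intro h hh
      have hneh := hne h hh
      have d := ((hasDerivAt_div_sq C h hneh).const_add (3/4)).hasDerivWithinAt
        (s := Set.Icc (0:ℝ) t)
      convert d using 1
      · rfl
      · rfl
      simp only [hy₂]
      field_simp
      ring
    · intro h hh
      have hneh := hne h hh
      have d := (((hasDerivAt_div_sq (3/2 * C) h hneh).const_add (7/8)).fun_add
        (hasDerivAt_div_cube D h hneh)).hasDerivWithinAt (s := Set.Icc (0:ℝ) t)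
      convert d using 1
      · rfl
      · rfl
      simp only [hy₂, hy₃]
      field_simp
      ring
    · simp only [hy₂, hC]
      field_simp
      ring
    · simp only [hy₃, hC, hD]
      field_simp
      ring
  refine ⟨y₂, y₃, hsol, ?_, ?_⟩
  · -- uniqueness
    rintro z₂ z₃ ⟨hz₂, hz₃, hz₂t, hz₃t⟩
    -- first component
    have hg₂ : ∀ h ∈ Set.Icc (0:ℝ) t,
        HasDerivWithinAt (fun h => (z₂ h - 3/4) * (1 - h) ^ 2) 0 (Set.Icc (0:ℝ) t) h := by
      intro h hh
      have hneh := hne h hh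
      have d := ((hz₂ h hh).sub_const (3/4)).fun_mul
        (((hasDerivAt_one_sub h).fun_pow 2).hasDerivWithinAt (s := Set.Icc (0:ℝ) t))
      convert d using 1
      · rfl
      · rfl
      field_simp
      ring
    have hconst₂ := const_on_Icc_of_deriv_zero hg₂
    have heq₂ : Set.EqOn z₂ y₂ (Set.Icc 0 t) := by
      intro h hh
      have := hconst₂ h hh
      have hneh := hne h hh
      simp only [hz₂t] at this
      simp only [hy₂, hC]
      field_simp at this ⊢
      linarith [this]
    refine ⟨heq₂, ?_⟩
    -- second component
    have hg₃ : ∀ h ∈ Set.Icc (0:ℝ) t,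
        HasDerivWithinAt (fun h => (z₃ h - 7/8) * (1 - h) ^ 3 - (3/2) * C * (1 - h)) 0
          (Set.Icc (0:ℝ) t) h := by
      intro h hh
      have hneh := hne h hh
      have d := (((hz₃ h hh).sub_const (7/8)).fun_mul
        (((hasDerivAt_one_sub h).fun_pow 3).hasDerivWithinAt (s := Set.Icc (0:ℝ) t))).fun_sub
        (((hasDerivAt_one_sub h).const_mul ((3:ℝ)/2 * C)).hasDerivWithinAt
          (s := Set.Icc (0:ℝ) t))
      convert d using 1
      · rfl
      · rfl
      have hz2 : z₂ h = 3/4 + C / (1 - h) ^ 2 := by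
        have := heq₂ hh
        rwa [hy₂] at this
      rw [hz2]
      field_simp
      ring
    have hconst₃ := const_on_Icc_of_deriv_zero hg₃
    intro h hh
    have this3 := hconst₃ h hh
    have hneh := hne h hh
    simp only [hz₃t] at this3
    have key : (z₃ h - 7/8) * (1 - h) ^ 3 = (3/2) * C * (1 - h) + D := by
      rw [hD]; linarith [this3]
    have h3 : ((1:ℝ) - h) ^ 3 ≠ 0 := pow_ne_zero 3 hneh
    have hzval : z₃ h = 7/8 + (3/2 * C * (1 - h) + D) / (1 - h) ^ 3 := by
      have e : (z₃ h - 7/8) = (3/2 * C * (1 - h) + D) / (1 - h) ^ 3 :=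
        (eq_div_iff h3).mpr key
      linarith [e]
    have split : (3/2 * C * (1 - h) + D) / (1 - h) ^ 3
        = 3/2 * C / (1 - h) ^ 2 + D / (1 - h) ^ 3 := by
      field_simp
    simp only [hy₃]
    rw [hzval, split]
    exact (add_assoc _ _ _).symm
  · -- value at 0
    have hv : y₃ 0 = 7/8 + 3/2 * C + D := by
      simp [hy₃]
    rw [hv, hD, hC]
    unfold gammaUC
    ring
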